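/- Let n ≥ 2, β > 0, γ > 0 and α a real number with α − (n−1)β > 0. Then the normalization constant 𝒵 = ∫_{0 ≤ x₁ ≤ … ≤ xₙ} ∏_{i=1}^n x_i^{α−(n−1)β−1} e^{−γ x_i²} · ∏_{1≤i<j≤n} (x_j² − x_i²)^β dx₁ … dxₙ is finite (and strictly positive). -/

import Mathlib

open MeasureTheory Finset
open Set Real ENNReal

lemma aux_inner_meas (a β γ : ℝ) (N : ℕ) :
    Measurable (fun t : ℝ => t ^ a * Real.exp (-γ * t^2) * ((max 1 t) ^ (2*β))^N) := by
  fun_prop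

/-- one-variable integrable bound -/
lemma aux_integrable_h (a β γ : ℝ) (ha : -1 < a) (hβ : 0 ≤ β) (hγ : 0 < γ) (N : ℕ) :
    Integrable (Set.indicator (Set.Ici (0:ℝ))
      (fun t => t ^ a * Real.exp (-γ * t^2) * ((max 1 t) ^ (2*β))^N)) := by
  rw [integrable_indicator_iff measurableSet_Ici, integrableOn_Ici_iff_integrableOn_Ioi]
  have h2 : (-1:ℝ) < a + 2*β*N := by
    have : (0:ℝ) ≤ 2*β*N := by positivity
    linarith
  have hG : IntegrableOn
      (fun t : ℝ => t ^ a * Real.exp (-γ * t^2) + t ^ (a+2*β*N) * Real.exp (-γ * t^2))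
      (Set.Ioi 0) :=
    (integrableOn_rpow_mul_exp_neg_mul_sq hγ ha).add
      (integrableOn_rpow_mul_exp_neg_mul_sq hγ h2)
  refine hG.integrable.mono' ((aux_inner_meas a β γ N).aestronglyMeasurable) ?_
  filter_upwards [self_mem_ae_restrict (measurableSet_Ioi : MeasurableSet (Set.Ioi (0:ℝ)))]
  intro t ht
  have ht0 : (0:ℝ) < t := ht
  have hnn : (0:ℝ) ≤ t ^ a * Real.exp (-γ * t^2) * ((max 1 t) ^ (2*β))^N := by positivity
  rw [Real.norm_eq_abs, abs_of_nonneg hnn]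
  rcases le_or_gt t 1 with h1 | h1
  · rw [max_eq_left h1, Real.one_rpow, one_pow, mul_one]
    have : (0:ℝ) ≤ t ^ (a+2*β*N) * Real.exp (-γ * t^2) := by positivity
    linarith
  · rw [max_eq_right h1.le]
    have he : t ^ a * Real.exp (-γ * t^2) * (t ^ (2*β))^N
        = t ^ (a+2*β*N) * Real.exp (-γ * t^2) := by
      rw [← Real.rpow_natCast (t ^ (2*β)) N, ← Real.rpow_mul ht0.le, Real.rpow_add ht0]
      ring
    rw [he]
    have : (0:ℝ) ≤ t ^ a * Real.exp (-γ * t^2) := by positivity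
    linarith


/-- The normalization constant of the stationary measure of the eigenvalue SDE
(Proposition 2.6 of the paper) is finite and strictly positive. -/
theorem stmt_6 (n : ℕ) (hn : 2 ≤ n) (α β γ : ℝ) (hβ : 0 < β) (hγ : 0 < γ)
    (hαβ : 0 < α - ((n : ℝ) - 1) * β) :
    0 < (∫⁻ x in {x : Fin n → ℝ | 0 ≤ x ⟨0, by omega⟩ ∧ Monotone x},
          ENNReal.ofReal
            ((∏ i : Fin n,
                (x i) ^ (α - ((n : ℝ) - 1) * β - 1) * Real.exp (-γ * (x i)^2)) *
              ∏ p ∈ Finset.univ.filter (fun p : Fin n × Fin n => p.1 < p.2),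
                ((x p.2)^2 - (x p.1)^2) ^ β)) ∧
    (∫⁻ x in {x : Fin n → ℝ | 0 ≤ x ⟨0, by omega⟩ ∧ Monotone x},
          ENNReal.ofReal
            ((∏ i : Fin n,
                (x i) ^ (α - ((n : ℝ) - 1) * β - 1) * Real.exp (-γ * (x i)^2)) *
              ∏ p ∈ Finset.univ.filter (fun p : Fin n × Fin n => p.1 < p.2),
                ((x p.2)^2 - (x p.1)^2) ^ β)) < ⊤ := by
  set a : ℝ := α - ((n : ℝ) - 1) * β - 1 with ha_def
  have ha : -1 < a := by simp only [ha_def]; linarith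
  set pairs : Finset (Fin n × Fin n) :=
    Finset.univ.filter (fun p : Fin n × Fin n => p.1 < p.2) with hpairs
  set N : ℕ := pairs.card with hN
  set S : Set (Fin n → ℝ) := {x : Fin n → ℝ | 0 ≤ x ⟨0, by omega⟩ ∧ Monotone x} with hS
  set bigR : (Fin n → ℝ) → ℝ := fun x =>
    (∏ i : Fin n, (x i) ^ a * Real.exp (-γ * (x i)^2)) *
      ∏ p ∈ pairs, ((x p.2)^2 - (x p.1)^2) ^ β with hbigR
  set big : (Fin n → ℝ) → ℝ≥0∞ := fun x => ENNReal.ofReal (bigR x) with hbig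
  have hbig_meas : Measurable big := by
    apply Measurable.ennreal_ofReal
    apply Measurable.mul
    · exact Finset.measurable_prod _ (fun i _ => by fun_prop)
    · exact Finset.measurable_prod _ (fun p _ => by fun_prop)
  set h : ℝ → ℝ := Set.indicator (Set.Ici (0:ℝ))
      (fun t => t ^ a * Real.exp (-γ * t^2) * ((max 1 t) ^ (2*β))^N) with hh
  have hh_meas : Measurable h :=
    (aux_inner_meas a β γ N).indicator measurableSet_Ici
  have hh_nn : ∀ t, 0 ≤ h t := by
    intro t
    rw [hh]
    apply Set.indicator_nonneg
    intro t ht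
    have ht' : (0:ℝ) ≤ t := ht
    positivity
  have hh_int : Integrable h := aux_integrable_h a β γ ha hβ.le hγ N
  -- nonnegativity of coordinates on S
  have hScoord : ∀ x ∈ S, ∀ i, 0 ≤ x i := by
    rintro x ⟨hx0, hxm⟩ i
    exact hx0.trans (hxm (by simp [Fin.le_def]))
  -- the pointwise bound on S
  have key : ∀ x ∈ S, bigR x ≤ ∏ i : Fin n, h (x i) := by
    intro x hxS
    have hxm : Monotone x := hxS.2
    have hx : ∀ i, 0 ≤ x i := hScoord x hxS
    set g : Fin n → ℝ := fun k => (max 1 (x k)) ^ (2*β) with hg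
    have hg_nn : ∀ k, 0 ≤ g k := fun k => by positivity
    have hg1 : ∀ k, (1:ℝ) ≤ g k := by
      intro k
      have : ((1:ℝ)) ^ (2*β) ≤ (max 1 (x k)) ^ (2*β) :=
        Real.rpow_le_rpow zero_le_one (le_max_left _ _) (by positivity)
      simpa using this
    set C : ℝ := ∏ k, g k with hC
    have hC1 : (1:ℝ) ≤ C := by
      calc (1:ℝ) = ∏ _k : Fin n, 1 := by simp
        _ ≤ C := Finset.prod_le_prod (fun _ _ => zero_le_one) (fun k _ => hg1 k)
    have hfactor : ∀ p ∈ pairs, ((x p.2)^2 - (x p.1)^2) ^ β ≤ C := by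
      intro p hp
      have hp12 : p.1 < p.2 := (Finset.mem_filter.mp hp).2
      have hxle : x p.1 ≤ x p.2 := hxm hp12.le
      have hd0 : (0:ℝ) ≤ (x p.2)^2 - (x p.1)^2 := by
        have := pow_le_pow_left₀ (hx p.1) hxle 2
        linarith
      set m : ℝ := max 1 (x p.2) with hm
      have hm1 : (1:ℝ) ≤ m := le_max_left _ _
      have hdle : (x p.2)^2 - (x p.1)^2 ≤ m^2 := by
        have h1 : (x p.2)^2 ≤ m^2 := pow_le_pow_left₀ (hx p.2) (le_max_right _ _) 2
        have h2 : (0:ℝ) ≤ (x p.1)^2 := sq_nonneg _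
        linarith
      have step1 : ((x p.2)^2 - (x p.1)^2) ^ β ≤ (m^2) ^ β :=
        Real.rpow_le_rpow hd0 hdle hβ.le
      have step2 : ((m^2 : ℝ)) ^ β = g p.2 := by
        rw [hg, hm, ← Real.rpow_natCast (max 1 (x p.2)) 2,
          ← Real.rpow_mul (by positivity : (0:ℝ) ≤ max 1 (x p.2))]
        norm_num
      have step3 : g p.2 ≤ C := by
        have h1 : (1:ℝ) ≤ ∏ k ∈ Finset.univ.erase p.2, g k := by
          calc (1:ℝ) = ∏ _k ∈ Finset.univ.erase p.2, 1 := by simp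
            _ ≤ _ := Finset.prod_le_prod (fun _ _ => zero_le_one) (fun k _ => hg1 k)
        calc g p.2 = g p.2 * 1 := by ring
          _ ≤ g p.2 * ∏ k ∈ Finset.univ.erase p.2, g k :=
              mul_le_mul_of_nonneg_left h1 (hg_nn p.2)
          _ = C := Finset.mul_prod_erase Finset.univ g (Finset.mem_univ p.2)
      calc ((x p.2)^2 - (x p.1)^2) ^ β ≤ (m^2) ^ β := step1
        _ = g p.2 := step2
        _ ≤ C := step3
    have hP : (∏ p ∈ pairs, ((x p.2)^2 - (x p.1)^2) ^ β) ≤ C ^ N := by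
      calc (∏ p ∈ pairs, ((x p.2)^2 - (x p.1)^2) ^ β)
          ≤ ∏ _p ∈ pairs, C := Finset.prod_le_prod
            (fun p hp => by
              have hp12 : p.1 < p.2 := (Finset.mem_filter.mp hp).2
              have hxle : x p.1 ≤ x p.2 := hxm hp12.le
              have := pow_le_pow_left₀ (hx p.1) hxle 2
              apply Real.rpow_nonneg; linarith)
            hfactor
        _ = C ^ N := by rw [Finset.prod_const, hN]
    have hhx : ∀ i, h (x i) = (x i) ^ a * Real.exp (-γ * (x i)^2) * g i ^ N := by
      intro i
      rw [hh, Set.indicator_of_mem (Set.mem_Ici.mpr (hx i))]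
    calc bigR x ≤ (∏ i : Fin n, (x i) ^ a * Real.exp (-γ * (x i)^2)) * C ^ N := by
          apply mul_le_mul_of_nonneg_left hP
          apply Finset.prod_nonneg
          intro i _
          have := hx i
          positivity
      _ = ∏ i : Fin n, h (x i) := by
          simp only [hhx, Finset.prod_mul_distrib, Finset.prod_pow, mul_assoc, hC]
  -- FINITENESS
  have hfin : (∫⁻ x in S, big x) < ⊤ := by
    have hF : Integrable (fun x : Fin n → ℝ => ∏ i : Fin n, h (x i)) :=
      Integrable.fintype_prod (f := fun _ : Fin n => h) (fun _ => hh_int)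
    have hFlt : (∫⁻ x : Fin n → ℝ, ENNReal.ofReal (∏ i : Fin n, h (x i))) < ⊤ := by
      rw [← hasFiniteIntegral_iff_ofReal (ae_of_all _ (fun x =>
        Finset.prod_nonneg (fun i _ => hh_nn (x i))))]
      exact hF.2
    calc (∫⁻ x in S, big x)
        ≤ ∫⁻ x in S, ENNReal.ofReal (∏ i : Fin n, h (x i)) := by
          apply setLIntegral_mono
          · exact (Finset.measurable_prod _
              (fun i _ => hh_meas.comp (measurable_pi_apply i))).ennreal_ofReal
          · intro x hxS
            exact ENNReal.ofReal_le_ofReal (key x hxS)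
      _ ≤ ∫⁻ x : Fin n → ℝ, ENNReal.ofReal (∏ i : Fin n, h (x i)) :=
          lintegral_mono' Measure.restrict_le_self le_rfl
      _ < ⊤ := hFlt
  -- POSITIVITY
  have hpos : 0 < (∫⁻ x in S, big x) := by
    set U : Set (Fin n → ℝ) :=
      Set.univ.pi fun i : Fin n => Set.Ioo (2*(i:ℝ)+1) (2*(i:ℝ)+2) with hU
    have hUvol : volume U = 1 := by
      rw [hU, volume_pi_pi]
      have : ∀ i : Fin n, volume (Set.Ioo (2*(i:ℝ)+1) (2*(i:ℝ)+2)) = 1 := by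
        intro i; rw [Real.volume_Ioo]; norm_num
      simp [this]
    have hUx : ∀ x ∈ U, ∀ i : Fin n, 2*(i:ℝ)+1 < x i ∧ x i < 2*(i:ℝ)+2 := by
      intro x hx i; exact hx i (Set.mem_univ i)
    have hUS : U ⊆ S := by
      intro x hx
      have hx' := hUx x hx
      constructor
      · have := (hx' ⟨0, by omega⟩).1
        simp only [Fin.val_mk, Nat.cast_zero] at this
        linarith
      · intro i j hij
        rcases eq_or_lt_of_le hij with rfl | hlt
        · exact le_rfl
        · have hij' : (i:ℝ) + 1 ≤ (j:ℝ) := by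
            have : (i:ℕ) < (j:ℕ) := hlt
            exact_mod_cast this
          have h1 := (hx' i).2
          have h2 := (hx' j).1
          linarith
    set R : ℝ := 2*(n:ℝ) with hR
    have hR0 : (0:ℝ) < R := by
      have : (0:ℝ) < (n:ℝ) := by
        have : 0 < n := by omega
        exact_mod_cast this
      linarith
    set m : ℝ := min 1 (R ^ a) with hm
    have hm0 : 0 < m := lt_min one_pos (Real.rpow_pos_of_pos hR0 a)
    set c : ℝ := (m * Real.exp (-γ * R^2))^n with hc
    have hc0 : 0 < c := pow_pos (mul_pos hm0 (Real.exp_pos _)) n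
    have hcle : ∀ x ∈ U, c ≤ bigR x := by
      intro x hx
      have hx' := hUx x hx
      have hx1 : ∀ i, 1 < x i := by
        intro i
        have h1 := (hx' i).1
        have h2 : (0:ℝ) ≤ (i:ℝ) := by positivity
        linarith
      have hxR : ∀ i, x i < R := by
        intro i
        have h1 := (hx' i).2
        have h2 : (i:ℝ) ≤ (n:ℝ) - 1 := by
          have h3 : (i:ℕ) + 1 ≤ n := i.isLt
          have h4 : ((i:ℕ):ℝ) + 1 ≤ (n:ℝ) := by exact_mod_cast h3
          linarith
        linarith
      have hA : ∀ i : Fin n, m * Real.exp (-γ * R^2) ≤ (x i) ^ a * Real.exp (-γ * (x i)^2) := by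
        intro i
        have hrp : m ≤ (x i) ^ a := by
          rcases le_or_gt 0 a with hA0 | hA0
          · calc m ≤ 1 := min_le_left _ _
              _ = (1:ℝ) ^ a := (Real.one_rpow a).symm
              _ ≤ (x i) ^ a := Real.rpow_le_rpow zero_le_one (hx1 i).le hA0
          · calc m ≤ R ^ a := min_le_right _ _
              _ ≤ (x i) ^ a := Real.rpow_le_rpow_of_nonpos
                  (by linarith [hx1 i]) (hxR i).le hA0.le
        have hexp : Real.exp (-γ * R^2) ≤ Real.exp (-γ * (x i)^2) := by
          apply Real.exp_le_exp.mpr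
          have hsq : (x i)^2 ≤ R^2 := by nlinarith [hx1 i, hxR i]
          nlinarith
        calc m * Real.exp (-γ * R^2) ≤ (x i) ^ a * Real.exp (-γ * R^2) :=
              mul_le_mul_of_nonneg_right hrp (Real.exp_pos _).le
          _ ≤ (x i) ^ a * Real.exp (-γ * (x i)^2) :=
              mul_le_mul_of_nonneg_left hexp (Real.rpow_nonneg (by linarith [hx1 i]) a)
      have hProdA : c ≤ ∏ i : Fin n, (x i) ^ a * Real.exp (-γ * (x i)^2) := by
        calc c = ∏ _i : Fin n, m * Real.exp (-γ * R^2) := by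
              rw [Finset.prod_const, Finset.card_univ, Fintype.card_fin]
          _ ≤ _ := Finset.prod_le_prod
              (fun _ _ => (mul_pos hm0 (Real.exp_pos _)).le) (fun i _ => hA i)
      have hProdP : (1:ℝ) ≤ ∏ p ∈ pairs, ((x p.2)^2 - (x p.1)^2) ^ β := by
        calc (1:ℝ) = ∏ _p ∈ pairs, 1 := by simp
          _ ≤ _ := by
            apply Finset.prod_le_prod (fun _ _ => zero_le_one)
            intro p hp
            have hp12 : p.1 < p.2 := (Finset.mem_filter.mp hp).2
            have hij' : (p.1:ℝ) + 1 ≤ (p.2:ℝ) := by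
              have : (p.1:ℕ) < (p.2:ℕ) := hp12
              exact_mod_cast this
            have h1 := (hx' p.1).2
            have h2 := (hx' p.2).1
            have h3 := hx1 p.1
            have hd1 : (1:ℝ) ≤ (x p.2)^2 - (x p.1)^2 := by nlinarith
            calc (1:ℝ) = (1:ℝ) ^ β := (Real.one_rpow β).symm
              _ ≤ _ := Real.rpow_le_rpow zero_le_one hd1 hβ.le
      calc c = c * 1 := by ring
        _ ≤ (∏ i : Fin n, (x i) ^ a * Real.exp (-γ * (x i)^2)) *
              ∏ p ∈ pairs, ((x p.2)^2 - (x p.1)^2) ^ β := by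
            apply mul_le_mul hProdA hProdP zero_le_one
            apply Finset.prod_nonneg
            intro i _
            have h0 : (0:ℝ) ≤ x i := by linarith [hx1 i]
            positivity
        _ = bigR x := rfl
    calc (0:ℝ≥0∞) < ENNReal.ofReal c := by
          simp [ENNReal.ofReal_pos, hc0]
      _ = ENNReal.ofReal c * volume U := by rw [hUvol, mul_one]
      _ = ∫⁻ _x in U, ENNReal.ofReal c := (setLIntegral_const U _).symm
      _ ≤ ∫⁻ x in U, big x := by
          apply setLIntegral_mono hbig_meas
          intro x hx
          exact ENNReal.ofReal_le_ofReal (hcle x hx)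
      _ ≤ ∫⁻ x in S, big x := lintegral_mono_set hUS
  exact ⟨hpos, hfin⟩
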